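/- Let B be a ring and M a left B-module. Then the following are equivalent: (1) for every ring C, every right C-module structure on M satisfying (b·m)·c = b·(m·c) for all b ∈ B, m ∈ M, c ∈ C, and every right C-module X, the right B-module Hom_C(M, X) (with action (f·b)(m) = f(b·m)) is hereditary projective; (2) the character module M⁺ := Hom_ℤ(M, ℚ/ℤ), with right B-action (f·b)(m) = f(b·m), is hereditary Π-projective as a right B-module. -/

import Mathlib

open MulOpposite

section HomModule

variable (B : Type) [Ring B] (C : Type) [Ring C]
variable (M : Type) [AddCommGroup M] [Module B M] [Module Cᵐᵒᵖ M] [SMulCommClass B Cᵐᵒᵖ M]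
variable (X : Type) [AddCommGroup X] [Module Cᵐᵒᵖ X]

/-- The right `B`-module structure `(f·b)(m) = f(b·m)` on `Hom_C(M, X)`, for a
`(B,C)`-bimodule `M` and a right `C`-module `X`. -/
instance homSMul : SMul Bᵐᵒᵖ (M →ₗ[Cᵐᵒᵖ] X) :=
  ⟨fun b f =>
    { toFun := fun m => f (b.unop • m)
      map_add' := fun m n => by
        show f (b.unop • (m + n)) = f (b.unop • m) + f (b.unop • n)
        rw [smul_add, map_add]
      map_smul' := fun c m => by
        show f (b.unop • (c • m)) = c • f (b.unop • m)
        rw [smul_comm b.unop c m, map_smul] }⟩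

instance homMulAction : MulAction Bᵐᵒᵖ (M →ₗ[Cᵐᵒᵖ] X) where
  one_smul f := LinearMap.ext fun m => by
    show f ((1 : Bᵐᵒᵖ).unop • m) = f m
    rw [unop_one, one_smul]
  mul_smul b b' f := LinearMap.ext fun m => by
    show f ((b * b').unop • m) = f (b'.unop • b.unop • m)
    rw [unop_mul, mul_smul]

instance homDistribMulAction : DistribMulAction Bᵐᵒᵖ (M →ₗ[Cᵐᵒᵖ] X) where
  smul_zero b := LinearMap.ext fun _ => rfl
  smul_add b f g := LinearMap.ext fun _ => rfl

instance homModule : Module Bᵐᵒᵖ (M →ₗ[Cᵐᵒᵖ] X) where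
  add_smul b b' f := LinearMap.ext fun m => by
    show f ((b + b').unop • m) = f (b.unop • m) + f (b'.unop • m)
    rw [unop_add, add_smul, map_add]
  zero_smul f := LinearMap.ext fun m => by
    show f ((0 : Bᵐᵒᵖ).unop • m) = 0
    rw [unop_zero, zero_smul, map_zero]

end HomModule

section CharMod

variable (B : Type) [Ring B] (M : Type) [AddCommGroup M] [Module B M]

/-- The right `B`-module structure `(f·b)(m) = f(b·m)` on the character module
`M⁺ = Hom_ℤ(M, ℚ/ℤ)` of a left `B`-module `M`. -/
instance charSMul : SMul Bᵐᵒᵖ (CharacterModule M) :=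
  ⟨fun b f => f.comp (DistribMulAction.toAddMonoidHom M b.unop)⟩

instance charMulAction : MulAction Bᵐᵒᵖ (CharacterModule M) where
  one_smul f := DFunLike.ext _ _ fun m => by
    show f ((1 : Bᵐᵒᵖ).unop • m) = f m
    rw [unop_one, one_smul]
  mul_smul b b' f := DFunLike.ext _ _ fun m => by
    show f ((b * b').unop • m) = f (b'.unop • b.unop • m)
    rw [unop_mul, mul_smul]

instance charDistribMulAction : DistribMulAction Bᵐᵒᵖ (CharacterModule M) where
  smul_zero b := DFunLike.ext _ _ fun _ => rfl
  smul_add b f g := DFunLike.ext _ _ fun _ => rfl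

instance charModule : Module Bᵐᵒᵖ (CharacterModule M) where
  add_smul b b' f := DFunLike.ext _ _ fun m => by
    show f ((b + b').unop • m) = f (b.unop • m) + f (b'.unop • m)
    rw [unop_add, add_smul, map_add]
  zero_smul f := DFunLike.ext _ _ fun m => by
    show f ((0 : Bᵐᵒᵖ).unop • m) = 0
    rw [unop_zero, zero_smul, map_zero]

end CharMod

/-- for a ring `B` and a left `B`-module `M`, the following are equivalent:
(1) for every ring `C`, every right `C`-module structure on `M` making it a
`(B,C)`-bimodule and every right `C`-module `X`, the right `B`-module `Hom_C(M,X)` is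
hereditary projective (all of its submodules are projective);
(2) the character module `M⁺ = Hom_ℤ(M, ℚ/ℤ)` is hereditary `Π`-projective as a right
`B`-module (all submodules of all direct powers of `M⁺` are projective). -/
theorem stmt_8 (B : Type) [Ring B] (M : Type) [AddCommGroup M] [Module B M] :
    (∀ (C : Type) [Ring C] [Module Cᵐᵒᵖ M] [SMulCommClass B Cᵐᵒᵖ M]
        (X : Type) [AddCommGroup X] [Module Cᵐᵒᵖ X]
        (N : Submodule Bᵐᵒᵖ (M →ₗ[Cᵐᵒᵖ] X)),
      Module.Projective Bᵐᵒᵖ N)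
    ↔
    (∀ (ι : Type) (N : Submodule Bᵐᵒᵖ (ι → CharacterModule M)),
      Module.Projective Bᵐᵒᵖ N) := by
  constructor
  · -- (1) → (2)
    intro h ι N
    -- use C = ℤ, with M a right ℤ-module via unop, X = ι → ℚ/ℤ
    letI instMZ : Module ℤᵐᵒᵖ M :=
      Module.compHom M ((RingEquiv.toOpposite ℤ).symm.toRingHom)
    haveI instComm : SMulCommClass B ℤᵐᵒᵖ M :=
      ⟨fun b z m => by
        show b • ((z.unop : ℤ) • m) = (z.unop : ℤ) • (b • m)
        exact ((DistribMulAction.toAddMonoidHom M b).map_zsmul z.unop m)⟩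
    letI instXZ : Module ℤᵐᵒᵖ (ι → AddCircle (1 : ℚ)) :=
      Module.compHom _ ((RingEquiv.toOpposite ℤ).symm.toRingHom)
    -- the B-linear equivalence Hom_ℤ(M, ι → ℚ/ℤ) ≃ (ι → M⁺)
    let e : (M →ₗ[ℤᵐᵒᵖ] (ι → AddCircle (1 : ℚ))) ≃ₗ[Bᵐᵒᵖ] (ι → CharacterModule M) :=
      { toFun := fun f i => (Pi.evalAddMonoidHom (fun _ : ι => AddCircle (1 : ℚ)) i).comp
          f.toAddMonoidHom
        invFun := fun g =>
          { toFun := fun m i => g i m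
            map_add' := fun m n => funext fun i => map_add (g i) m n
            map_smul' := fun z m => funext fun i => by
              show g i ((z.unop : ℤ) • m) = ((z.unop : ℤ) • (fun j => g j m)) i
              rw [map_zsmul]
              rfl }
        left_inv := fun f => rfl
        right_inv := fun g => rfl
        map_add' := fun f g => rfl
        map_smul' := fun b f => rfl }
    haveI : Module.Projective Bᵐᵒᵖ (N.map (e.symm : (ι → CharacterModule M) →ₗ[Bᵐᵒᵖ]
        (M →ₗ[ℤᵐᵒᵖ] (ι → AddCircle (1 : ℚ))))) :=
      h ℤ (ι → AddCircle (1 : ℚ)) _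
    exact Module.Projective.of_equiv (e.symm.submoduleMap N).symm
  · -- (2) → (1)
    intro h C _ _ _ X _ _ N
    -- embed Hom_C(M, X) into (X⁺ → M⁺) via f ↦ (χ ↦ χ ∘ f)
    let Φ : (M →ₗ[Cᵐᵒᵖ] X) →ₗ[Bᵐᵒᵖ] (CharacterModule X → CharacterModule M) :=
      { toFun := fun f χ => χ.comp f.toAddMonoidHom
        map_add' := fun f g => funext fun χ => by
          ext m
          exact map_add χ (f m) (g m)
        map_smul' := fun b f => rfl }
    have hΦ : Function.Injective Φ := by
      intro f g hfg
      ext m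
      have h0 : ∀ χ : CharacterModule X, χ (f m - g m) = 0 := fun χ => by
        rw [map_sub]
        have := congrFun (congrArg (fun p => p χ) hfg)
        have h1 : χ (f m) = χ (g m) := congrFun (congrArg (fun q => q.toFun) (congrFun hfg χ)) m
        rw [h1, sub_self]
      have := CharacterModule.eq_zero_of_character_apply h0
      exact sub_eq_zero.mp this
    haveI : Module.Projective Bᵐᵒᵖ (N.map Φ) := h (CharacterModule X) _
    exact Module.Projective.of_equiv (Submodule.equivMapOfInjective Φ hΦ N).symm
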